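/- Let c : ℍ → ℂ be a continuous function. If there exists an elliptic matrix E = [[α,β],[γ,δ]] ∈ SL(2,ℝ) of infinite order such that exp(−i·arg(γz + δ)) · c(E·z) = c(z) for all z ∈ ℍ (i.e. c|₁E = c for the weight-1 action), then c = 0. -/

import Mathlib

open Matrix MatrixGroups UpperHalfPlane

namespace OneCircleAux
noncomputable section

/-- Bottom-row linear factor. -/
def D (g : SL(2, ℝ)) (z : ℍ) : ℂ := ((g 1 0 : ℝ) : ℂ) * z + ((g 1 1 : ℝ) : ℂ)

lemma D_ne_zero (g : SL(2, ℝ)) (z : ℍ) : D g z ≠ 0 := by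
  have hrow : ![g 1 0, g 1 1] ≠ 0 := by
    intro hr
    have h0 : g 1 0 = 0 := congrFun hr 0
    have h1 : g 1 1 = 0 := congrFun hr 1
    have hdet : Matrix.det (g : Matrix (Fin 2) (Fin 2) ℝ) = 1 := g.2
    rw [Matrix.det_fin_two] at hdet
    simp only [h0, h1] at hdet
    norm_num at hdet
  simpa [D] using UpperHalfPlane.linear_ne_zero (cd := ![g 1 0, g 1 1]) z hrow

lemma smul_coe (g : SL(2, ℝ)) (z : ℍ) :
    ((g • z : ℍ) : ℂ) = (((g 0 0 : ℝ) : ℂ) * z + ((g 0 1 : ℝ) : ℂ)) / D g z := by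
  rw [UpperHalfPlane.specialLinearGroup_apply]
  simp [D, UpperHalfPlane.coe_mk]

lemma exp_neg_arg (w : ℂ) (hw : w ≠ 0) :
    Complex.exp (-Complex.I * (w.arg : ℂ)) = (starRingEnd ℂ) w / (‖w‖ : ℂ) := by
  have habs : (‖w‖ : ℂ) ≠ 0 := by
    simpa using hw
  have h1 : (‖w‖ : ℂ) * Complex.exp (w.arg * Complex.I) = w :=
    Complex.norm_mul_exp_arg_mul_I w
  have h2 : Complex.exp (-Complex.I * (w.arg : ℂ)) * Complex.exp (w.arg * Complex.I) = 1 := by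
    rw [← Complex.exp_add]; ring_nf; exact Complex.exp_zero
  have h3 : w * (starRingEnd ℂ) w = (‖w‖ : ℂ) ^ 2 := by
    rw [Complex.mul_conj]
    norm_cast
    rw [← Complex.sq_norm]
  have h6 : Complex.exp (↑w.arg * Complex.I) = w / (‖w‖ : ℂ) := by
    rw [eq_div_iff habs]; linear_combination h1
  have h7 : Complex.exp (-Complex.I * (w.arg : ℂ)) = 1 / Complex.exp (↑w.arg * Complex.I) :=
    eq_one_div_of_mul_eq_one_left h2
  rw [h7, h6, one_div_div, div_eq_div_iff hw habs]
  linear_combination -h3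

lemma D_cocycle (g h : SL(2, ℝ)) (z : ℍ) : D (g * h) z = D g (h • z) * D h z := by
  have hd := D_ne_zero h z
  have hmul10 : (g * h) 1 0 = g 1 0 * h 0 0 + g 1 1 * h 1 0 := by
    simp [Matrix.SpecialLinearGroup.coe_mul, Matrix.mul_apply, Fin.sum_univ_two]
  have hmul11 : (g * h) 1 1 = g 1 0 * h 0 1 + g 1 1 * h 1 1 := by
    simp [Matrix.SpecialLinearGroup.coe_mul, Matrix.mul_apply, Fin.sum_univ_two]
  simp only [D, smul_coe, hmul10, hmul11]
  field_simp [D] at *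
  push_cast
  simp only [D] at hd
  field_simp
  ring

/-- Weight-1 invariance predicate. -/
def Inv (c : ℍ → ℂ) (g : SL(2, ℝ)) : Prop :=
  ∀ z : ℍ, (starRingEnd ℂ) (D g z) / (‖D g z‖ : ℂ) * c (g • z) = c z

lemma W_mul (g h : SL(2, ℝ)) (z : ℍ) :
    (starRingEnd ℂ) (D (g * h) z) / (‖D (g * h) z‖ : ℂ) =
      ((starRingEnd ℂ) (D g (h • z)) / (‖D g (h • z)‖ : ℂ)) *
        ((starRingEnd ℂ) (D h z) / (‖D h z‖ : ℂ)) := by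
  rw [D_cocycle, _root_.map_mul, norm_mul]
  push_cast
  ring

lemma Inv.one (c : ℍ → ℂ) : Inv c 1 := by
  intro z
  have h10 : ((1 : SL(2, ℝ)) 1 0 : ℝ) = 0 := by simp
  have h11 : ((1 : SL(2, ℝ)) 1 1 : ℝ) = 1 := by simp
  simp [Inv, D, h10, h11]

lemma Inv.mul {c : ℍ → ℂ} {g h : SL(2, ℝ)} (hg : Inv c g) (hh : Inv c h) : Inv c (g * h) := by
  intro z
  rw [W_mul, mul_smul]
  calc (starRingEnd ℂ) (D g (h • z)) / (‖D g (h • z)‖ : ℂ) *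
        ((starRingEnd ℂ) (D h z) / (‖D h z‖ : ℂ)) * c (g • h • z)
      = (starRingEnd ℂ) (D h z) / (‖D h z‖ : ℂ) *
        ((starRingEnd ℂ) (D g (h • z)) / (‖D g (h • z)‖ : ℂ) * c (g • h • z)) := by
        ring
    _ = (starRingEnd ℂ) (D h z) / (‖D h z‖ : ℂ) * c (h • z) := by rw [hg (h • z)]
    _ = c z := hh z

lemma Inv.inv {c : ℍ → ℂ} {g : SL(2, ℝ)} (hg : Inv c g) : Inv c g⁻¹ := by
  intro z
  have key := hg (g⁻¹ • z)
  rw [smul_inv_smul] at key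
  have hW : ((starRingEnd ℂ) (D g (g⁻¹ • z)) / (‖D g (g⁻¹ • z)‖ : ℂ)) *
      ((starRingEnd ℂ) (D g⁻¹ z) / (‖D g⁻¹ z‖ : ℂ)) = 1 := by
    rw [← W_mul, mul_inv_cancel]
    have h10 : ((1 : SL(2, ℝ)) 1 0 : ℝ) = 0 := by simp
    have h11 : ((1 : SL(2, ℝ)) 1 1 : ℝ) = 1 := by simp
    simp [D, h10, h11]
  calc (starRingEnd ℂ) (D g⁻¹ z) / (‖D g⁻¹ z‖ : ℂ) * c (g⁻¹ • z)
      = (starRingEnd ℂ) (D g⁻¹ z) / (‖D g⁻¹ z‖ : ℂ) *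
        (((starRingEnd ℂ) (D g (g⁻¹ • z)) / (‖D g (g⁻¹ • z)‖ : ℂ)) * c z) := by
        rw [key]
    _ = (((starRingEnd ℂ) (D g (g⁻¹ • z)) / (‖D g (g⁻¹ • z)‖ : ℂ)) *
        ((starRingEnd ℂ) (D g⁻¹ z) / (‖D g⁻¹ z‖ : ℂ))) * c z := by ring
    _ = c z := by rw [hW, one_mul]

lemma Inv.zpow {c : ℍ → ℂ} {g : SL(2, ℝ)} (hg : Inv c g) : ∀ n : ℤ, Inv c (g ^ n) := by
  intro n
  induction n using Int.induction_on with
  | zero => simpa using Inv.one c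
  | succ k ih => rw [_root_.zpow_add_one]; exact ih.mul hg
  | pred k ih => rw [_root_.zpow_sub_one]; exact ih.mul hg.inv


section Power
variable (g : SL(2, ℝ))

lemma CH : (g : Matrix (Fin 2) (Fin 2) ℝ) * g =
    (g 0 0 + g 1 1) • (g : Matrix (Fin 2) (Fin 2) ℝ) - 1 := by
  have hdet : g 0 0 * g 1 1 - g 0 1 * g 1 0 = 1 := by
    have := g.2; rwa [Matrix.det_fin_two] at this
  ext i j
  fin_cases i <;> fin_cases j <;>
    simp [Matrix.mul_apply, Fin.sum_univ_two, Matrix.one_apply, Matrix.smul_apply] <;>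
    nlinarith [hdet]

lemma inv_coe : ((g⁻¹ : SL(2, ℝ)) : Matrix (Fin 2) (Fin 2) ℝ) =
    (g 0 0 + g 1 1) • (1 : Matrix (Fin 2) (Fin 2) ℝ) - g := by
  rw [Matrix.SpecialLinearGroup.coe_inv, Matrix.adjugate_fin_two]
  ext i j
  fin_cases i <;> fin_cases j <;>
    simp [Matrix.one_apply, Matrix.smul_apply]

variable {θ : ℝ} (hθ : (g 0 0 : ℝ) + g 1 1 = 2 * Real.cos θ) (hs : Real.sin θ ≠ 0)
include hθ hs

lemma pow_formula : ∀ n : ℤ, ((g ^ n : SL(2, ℝ)) : Matrix (Fin 2) (Fin 2) ℝ) =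
    (Real.sin (n * θ) / Real.sin θ) • (g : Matrix (Fin 2) (Fin 2) ℝ) -
      (Real.sin ((n - 1) * θ) / Real.sin θ) • 1 := by
  have trig : ∀ x : ℝ, Real.sin (x + θ) = 2 * Real.cos θ * Real.sin x - Real.sin (x - θ) := by
    intro x; rw [Real.sin_add, Real.sin_sub]; ring
  intro n
  induction n using Int.induction_on with
  | zero => simp [Real.sin_neg, neg_div, hs]
  | succ k ih =>
      have hco : ((g ^ ((k : ℤ) + 1) : SL(2, ℝ)) : Matrix (Fin 2) (Fin 2) ℝ) =
          ((g ^ (k : ℤ) : SL(2, ℝ)) : Matrix (Fin 2) (Fin 2) ℝ) * g := by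
        rw [_root_.zpow_add_one]; simp
      rw [hco, ih, Matrix.sub_mul, Matrix.smul_mul, Matrix.smul_mul, Matrix.one_mul, CH g, hθ]
      have e1 : Real.sin (((k : ℝ) + 1) * θ) =
          2 * Real.cos θ * Real.sin ((k : ℝ) * θ) - Real.sin (((k : ℝ) - 1) * θ) := by
        have h1 : ((k : ℝ) + 1) * θ = (k : ℝ) * θ + θ := by ring
        have h2 : ((k : ℝ) - 1) * θ = (k : ℝ) * θ - θ := by ring
        rw [h1, h2, trig]
      have e2 : (((k : ℤ) + 1 : ℤ) : ℝ) = (k : ℝ) + 1 := by push_cast; ring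
      have e3 : (((k : ℤ) + 1 - 1 : ℤ) : ℝ) = (k : ℝ) := by push_cast; ring
      rw [smul_sub, smul_smul]
      push_cast
      rw [e1]
      ext i j
      simp only [Matrix.sub_apply, Matrix.smul_apply, Matrix.one_apply, smul_eq_mul]
      by_cases hij : i = j <;> simp [hij] <;> field_simp <;> ring
  | pred k ih =>
      have hco : ((g ^ (-(k : ℤ) - 1) : SL(2, ℝ)) : Matrix (Fin 2) (Fin 2) ℝ) =
          ((g ^ (-(k : ℤ)) : SL(2, ℝ)) : Matrix (Fin 2) (Fin 2) ℝ) *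
            ((g⁻¹ : SL(2, ℝ)) : Matrix (Fin 2) (Fin 2) ℝ) := by
        rw [_root_.zpow_sub_one]; simp
      rw [hco, ih, inv_coe, Matrix.sub_mul, Matrix.smul_mul, Matrix.smul_mul]
      rw [Matrix.mul_sub, Matrix.mul_sub, Matrix.mul_smul, Matrix.mul_smul,
        Matrix.mul_one, Matrix.mul_one, CH g, hθ]
      have e1 : Real.sin ((-(k : ℝ) - 2) * θ) =
          2 * Real.cos θ * Real.sin ((-(k : ℝ) - 1) * θ) - Real.sin ((-(k : ℝ)) * θ) := by
        have h1 : (-(k : ℝ) - 2) * θ = (-(k : ℝ) - 1) * θ - θ := by ring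
        have h2 : (-(k : ℝ)) * θ = (-(k : ℝ) - 1) * θ + θ := by ring
        rw [h1, h2, trig]; ring
      push_cast
      rw [show (-(k : ℝ) - 1 - 1) = (-(k : ℝ) - 2) by ring, e1]
      ext i j
      simp only [Matrix.sub_apply, Matrix.smul_apply, Matrix.one_apply, smul_eq_mul,
        Matrix.smul_apply]
      by_cases hij : i = j <;> simp [hij] <;> field_simp <;> ring

end Power

open Filter Topology in
lemma exists_seq (θ : ℝ)
    (hroot : ∀ l : ℤ, l ≠ 0 → ¬ ∃ k : ℤ, (l : ℝ) * θ = (k : ℝ) * (2 * Real.pi)) :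
    ∃ m : ℕ → ℤ,
      Tendsto (fun j => Real.sin ((m j : ℝ) * θ)) atTop (𝓝 0) ∧
      Tendsto (fun j => Real.cos ((m j : ℝ) * θ)) atTop (𝓝 (-1)) := by
  set S : AddSubgroup ℝ := AddSubgroup.zmultiples θ ⊔ AddSubgroup.zmultiples (2 * Real.pi)
    with hS
  have hdense : Dense (S : Set ℝ) := by
    rcases S.dense_or_cyclic with h | ⟨α, hα⟩
    · exact h
    · exfalso
      have hθS : θ ∈ S := le_sup_left (α := AddSubgroup ℝ)
        (AddSubgroup.mem_zmultiples θ)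
      have hpS : 2 * Real.pi ∈ S := le_sup_right (α := AddSubgroup ℝ)
        (AddSubgroup.mem_zmultiples (2 * Real.pi))
      rw [hα] at hθS hpS
      obtain ⟨k, hk⟩ := AddSubgroup.mem_closure_singleton.mp hθS
      obtain ⟨l, hl⟩ := AddSubgroup.mem_closure_singleton.mp hpS
      have hl0 : l ≠ 0 := by
        intro h0
        rw [h0] at hl
        simp at hl
      refine hroot l hl0 ⟨k, ?_⟩
      rw [← hk, ← hl]
      simp only [zsmul_eq_mul]
      ring
  have hπ : Real.pi ∈ closure (S : Set ℝ) := hdense Real.pi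
  obtain ⟨f, hfS, hf⟩ := mem_closure_iff_seq_limit.mp hπ
  have hrep : ∀ j : ℕ, ∃ m l : ℤ, (m : ℝ) * θ + (l : ℝ) * (2 * Real.pi) = f j := by
    intro j
    obtain ⟨u, hu, v, hv, huv⟩ := AddSubgroup.mem_sup.mp (hfS j)
    obtain ⟨m, hm⟩ := AddSubgroup.mem_zmultiples_iff.mp hu
    obtain ⟨l, hl⟩ := AddSubgroup.mem_zmultiples_iff.mp hv
    exact ⟨m, l, by rw [← huv, ← hm, ← hl]; simp [zsmul_eq_mul]⟩
  choose m l hml using hrep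
  refine ⟨m, ?_, ?_⟩
  · have : ∀ j, Real.sin ((m j : ℝ) * θ) = Real.sin (f j) := by
      intro j
      rw [← hml j, Real.sin_add_int_mul_two_pi]
    simp only [this]
    have : Real.sin Real.pi = 0 := Real.sin_pi
    simpa [this, Function.comp_def] using (Real.continuous_sin.continuousAt.tendsto.comp hf)
  · have : ∀ j, Real.cos ((m j : ℝ) * θ) = Real.cos (f j) := by
      intro j
      rw [← hml j, Real.cos_add_int_mul_two_pi]
    simp only [this]
    have : Real.cos Real.pi = -1 := Real.cos_pi
    simpa [this, Function.comp_def] using (Real.continuous_cos.continuousAt.tendsto.comp hf)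


lemma trace_sq_lt (E : SL(2, ℝ))
    (hell : ∃! z : ℍ, E • z = z)
    (hinf : ∀ n : ℕ, 0 < n → E ^ n ≠ 1) :
    ((E 0 0 : ℝ) + E 1 1) ^ 2 < 4 := by
  obtain ⟨z₀, hz₀, huniq⟩ := hell
  set a := (E 0 0 : ℝ) with ha
  set b := (E 0 1 : ℝ) with hb
  set cc := (E 1 0 : ℝ) with hcc
  set d := (E 1 1 : ℝ) with hd
  have hdet : a * d - b * cc = 1 := by
    have := E.2; rwa [Matrix.det_fin_two] at this
  set x := (z₀ : ℂ).re with hx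
  set y := (z₀ : ℂ).im with hy
  have hy0 : 0 < y := z₀.2
  have heq : (a : ℂ) * z₀ + b = (z₀ : ℂ) * (((cc : ℝ) : ℂ) * z₀ + d) := by
    have h1 := congrArg (UpperHalfPlane.coe) hz₀
    rw [smul_coe] at h1
    rw [div_eq_iff (D_ne_zero E z₀)] at h1
    simpa [D] using h1
  rw [Complex.ext_iff] at heq
  obtain ⟨hre, him⟩ := heq
  simp only [Complex.add_re, Complex.add_im, Complex.mul_re, Complex.mul_im,
    Complex.ofReal_re, Complex.ofReal_im] at hre him
  rw [← hx, ← hy] at hre him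
  clear_value a b cc d x y
  -- him : imaginary part, hre : real part
  have hca : d - a = -2 * cc * x := by
    have : y * (2 * cc * x + (d - a)) = 0 := by linarith [him]
    have h2 : 2 * cc * x + (d - a) = 0 := by
      rcases mul_eq_zero.mp this with h | h
      · exact absurd h (ne_of_gt hy0)
      · exact h
    linarith
  have hbb : b = -cc * (x ^ 2 + y ^ 2) := by linear_combination hre + x * hca
  have hc0 : cc ≠ 0 := by
    intro hc
    have hda : d = a := by rw [hc] at hca; linarith [hca]
    have hb0 : b = 0 := by rw [hc] at hbb; linarith [hbb]
    have ha2 : a * a = 1 := by linear_combination hdet - a * hda + cc * hb0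
    rcases mul_self_eq_one_iff.mp ha2 with h1 | h1
    · -- E = 1
      apply hinf 1 one_pos
      rw [pow_one]
      ext i j
      fin_cases i <;> fin_cases j <;>
        simp [← ha, ← hb, ← hcc, ← hd, h1, hc, hb0, hda ▸ h1]
    · -- E = -1 : every point fixed, contradicting uniqueness
      have hfix : ∀ w : ℍ, E • w = w := by
        intro w
        have hcoe : ((E • w : ℍ) : ℂ) = w := by
          rw [smul_coe]
          have hD : D E w = -1 := by
            simp [D, ← hcc, ← hd, hc, hda ▸ h1]
          rw [hD]
          rw [← ha, ← hb] at *
          rw [h1, hb0]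
          push_cast
          ring_nf
        exact UpperHalfPlane.ext hcoe
      have h1' := huniq ((1 : ℝ) +ᵥ z₀) (hfix _)
      have h2' := congrArg (fun w : ℍ => (w : ℂ).re) h1'
      simp [UpperHalfPlane.coe_vadd] at h2'
  have key : (a + d) ^ 2 = 4 - 4 * (cc * y) ^ 2 := by
    linear_combination (d - a - 2 * cc * x) * hca + 4 * hdet + 4 * cc * hbb
  have h5 : cc * y ≠ 0 := mul_ne_zero hc0 (ne_of_gt hy0)
  have h6 : 0 < (cc * y) ^ 2 := (sq_nonneg _).lt_of_ne (Ne.symm (pow_ne_zero 2 h5))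
  linarith [key, h6]


end
end OneCircleAux

open OneCircleAux Filter Topology in
/-- **One circle lemma (weight 1).** If a continuous function on the upper half-plane is
invariant under the weight-1 action of an elliptic matrix of infinite order, then it
vanishes identically. -/
theorem one_circle_lemma (c : ℍ → ℂ) (hc : Continuous c)
    (E : SL(2, ℝ))
    (hell : ∃! z : ℍ, E • z = z)
    (hinf : ∀ n : ℕ, 0 < n → E ^ n ≠ 1)
    (h : ∀ z : ℍ,
      Complex.exp (-Complex.I * (Complex.arg ((E 1 0 : ℝ) * (z : ℂ) + (E 1 1 : ℝ)) : ℂ)) *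
        c (E • z) = c z) :
    ∀ z : ℍ, c z = 0 := by
  intro z
  -- invariance for all integer powers
  have hInvE : Inv c E := by
    intro w
    rw [← exp_neg_arg _ (D_ne_zero E w)]
    exact h w
  have hInv : ∀ n : ℤ, Inv c (E ^ n) := hInvE.zpow
  -- abbreviations
  have htr := trace_sq_lt E hell hinf
  set a : ℝ := E 0 0 with ha
  set b : ℝ := E 0 1 with hb
  set cc : ℝ := E 1 0 with hcc
  set d : ℝ := E 1 1 with hd
  set t : ℝ := a + d with ht
  clear_value a b cc d t
  have ht2 : (t / 2) ^ 2 < 1 := by nlinarith [htr]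
  set θ := Real.arccos (t / 2) with hθdef
  have hcos : Real.cos θ = t / 2 := Real.cos_arccos (by nlinarith) (by nlinarith)
  have hθeq : (E 0 0 : ℝ) + E 1 1 = 2 * Real.cos θ := by
    rw [← ha, ← hd, hcos, ht]; ring
  have hsin : 0 < Real.sin θ := by
    rw [hθdef, Real.sin_arccos]
    exact Real.sqrt_pos.mpr (by nlinarith)
  have hs : Real.sin θ ≠ 0 := ne_of_gt hsin
  -- entries of powers
  have pow_entry : ∀ (n : ℤ) (i j : Fin 2),
      ((E ^ n : SL(2, ℝ)) i j : ℝ) =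
        Real.sin ((n : ℝ) * θ) / Real.sin θ * (E i j : ℝ) -
          Real.sin (((n : ℝ) - 1) * θ) / Real.sin θ * (1 : Matrix (Fin 2) (Fin 2) ℝ) i j := by
    intro n i j
    have hm := pow_formula E hθeq hs n
    have h2 := congrFun (congrFun hm i) j
    simpa [Matrix.sub_apply, Matrix.smul_apply, smul_eq_mul] using h2
  -- no root of unity
  have hroot : ∀ l : ℤ, l ≠ 0 → ¬∃ k : ℤ, (l : ℝ) * θ = (k : ℝ) * (2 * Real.pi) := by
    rintro l hl0 ⟨k, hk⟩
    have hsl : Real.sin ((l : ℝ) * θ) = 0 := by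
      rw [hk, show ((k:ℝ)) * (2 * Real.pi) = ((2*k : ℤ) : ℝ) * Real.pi by push_cast; ring]
      exact Real.sin_int_mul_pi _
    have hsl1 : Real.sin (((l : ℝ) - 1) * θ) = -Real.sin θ := by
      have hrw : ((l : ℝ) - 1) * θ = (k : ℝ) * (2 * Real.pi) - θ := by rw [← hk]; ring
      rw [hrw, Real.sin_int_mul_two_pi_sub]
    have hmat := pow_formula E hθeq hs l
    rw [hsl, hsl1] at hmat
    have hE1 : (E ^ l : SL(2, ℝ)) = 1 := by
      apply Subtype.ext
      rw [hmat]
      simp [neg_div, div_self hs]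
    have hEn : E ^ (l.natAbs) = 1 := by
      rcases Int.natAbs_eq l with hcase | hcase
      · rw [← zpow_natCast, ← hcase]; exact hE1
      · rw [← zpow_natCast, show ((l.natAbs : ℕ) : ℤ) = -l by omega, _root_.zpow_neg, hE1, inv_one]
    exact hinf l.natAbs (Int.natAbs_pos.mpr hl0) hEn
  obtain ⟨m, hm0, hm1⟩ := exists_seq θ hroot
  -- scalar sequences
  set A : ℕ → ℝ := fun j => Real.sin ((m j : ℝ) * θ) / Real.sin θ with hA
  set B : ℕ → ℝ := fun j => Real.sin (((m j : ℝ) - 1) * θ) / Real.sin θ with hB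
  have hAlim : Tendsto A atTop (𝓝 0) := by
    have := hm0.div_const (Real.sin θ)
    simpa using this
  have hBlim : Tendsto B atTop (𝓝 1) := by
    have hBj : ∀ j, B j = (Real.sin ((m j : ℝ) * θ) * Real.cos θ -
        Real.cos ((m j : ℝ) * θ) * Real.sin θ) / Real.sin θ := by
      intro j
      rw [hB]
      simp only
      rw [show ((m j : ℝ) - 1) * θ = (m j : ℝ) * θ - θ by ring, Real.sin_sub]
    have hlim : Tendsto (fun j => (Real.sin ((m j : ℝ) * θ) * Real.cos θ -
        Real.cos ((m j : ℝ) * θ) * Real.sin θ) / Real.sin θ) atTop (𝓝 ((0 * Real.cos θ - (-1) * Real.sin θ) / Real.sin θ)) :=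
      ((hm0.mul tendsto_const_nhds).sub (hm1.mul tendsto_const_nhds)).div_const (Real.sin θ)
    have : (0 * Real.cos θ - (-1) * Real.sin θ) / Real.sin θ = 1 := by field_simp; ring
    rw [this] at hlim
    simpa only [← hBj] using hlim
  -- denominators and numerators
  have hDj : ∀ j, D (E ^ m j) z =
      ((A j * cc : ℝ) : ℂ) * (z : ℂ) + ((A j * d - B j : ℝ) : ℂ) := by
    intro j
    rw [D]
    rw [pow_entry (m j) 1 0, pow_entry (m j) 1 1]
    rw [Matrix.one_apply]
    simp only [Fin.isValue, ← hcc, ← hd, hA, hB]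
    norm_num
  have hNj : ∀ j, ((E ^ m j • z : ℍ) : ℂ) =
      (((A j * a - B j : ℝ) : ℂ) * (z : ℂ) + ((A j * b : ℝ) : ℂ)) / D (E ^ m j) z := by
    intro j
    rw [smul_coe]
    congr 1
    rw [pow_entry (m j) 0 0, pow_entry (m j) 0 1]
    rw [Matrix.one_apply]
    simp only [Fin.isValue, ← ha, ← hb, hA, hB]
    norm_num
  -- limit of the denominator
  have hD : Tendsto (fun j => D (E ^ m j) z) atTop (𝓝 (-1)) := by
    have T1 : Tendsto (fun j => ((A j * cc : ℝ) : ℂ)) atTop (𝓝 ((0 : ℝ) : ℂ)) := by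
      apply Complex.continuous_ofReal.continuousAt.tendsto.comp
      simpa using hAlim.mul_const cc
    have T2 : Tendsto (fun j => ((A j * d - B j : ℝ) : ℂ)) atTop (𝓝 ((-1 : ℝ) : ℂ)) := by
      apply Complex.continuous_ofReal.continuousAt.tendsto.comp
      have := (hAlim.mul_const d).sub hBlim
      simpa using this
    have := (T1.mul (tendsto_const_nhds (x := (z : ℂ)))).add T2
    simp only [hDj]
    convert this using 2
    push_cast
    ring
  have hDne : (-1 : ℂ) ≠ 0 := by norm_num
  -- limit of the numerator
  have hN : Tendsto (fun j => (((A j * a - B j : ℝ) : ℂ) * (z : ℂ) + ((A j * b : ℝ) : ℂ)))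
      atTop (𝓝 (-(z : ℂ))) := by
    have T1 : Tendsto (fun j => ((A j * a - B j : ℝ) : ℂ)) atTop (𝓝 ((-1 : ℝ) : ℂ)) := by
      apply Complex.continuous_ofReal.continuousAt.tendsto.comp
      have := (hAlim.mul_const a).sub hBlim
      simpa using this
    have T2 : Tendsto (fun j => ((A j * b : ℝ) : ℂ)) atTop (𝓝 ((0 : ℝ) : ℂ)) := by
      apply Complex.continuous_ofReal.continuousAt.tendsto.comp
      simpa using hAlim.mul_const b
    have := (T1.mul (tendsto_const_nhds (x := (z : ℂ)))).add T2
    convert this using 1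
    push_cast
    ring
  -- limit of the orbit
  have hzlimℂ : Tendsto (fun j => ((E ^ m j • z : ℍ) : ℂ)) atTop (𝓝 (z : ℂ)) := by
    simp only [hNj]
    have := hN.div hD hDne
    simpa [Pi.div_def] using this
  have hzH : Tendsto (fun j => E ^ m j • z) atTop (𝓝 z) :=
    UpperHalfPlane.isEmbedding_coe.tendsto_nhds_iff.mpr hzlimℂ
  have hczlim : Tendsto (fun j => c (E ^ m j • z)) atTop (𝓝 (c z)) :=
    hc.continuousAt.tendsto.comp hzH
  -- limit of the weight factor
  have hWlim : Tendsto (fun j => (starRingEnd ℂ) (D (E ^ m j) z) /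
      (‖D (E ^ m j) z‖ : ℂ)) atTop (𝓝 (-1)) := by
    have hconj : Tendsto (fun j => (starRingEnd ℂ) (D (E ^ m j) z)) atTop
        (𝓝 ((starRingEnd ℂ) (-1))) :=
      (Complex.continuous_conj.continuousAt.tendsto).comp hD
    have habs : Tendsto (fun j => ((‖D (E ^ m j) z‖ : ℝ) : ℂ)) atTop
        (𝓝 ((‖(-1 : ℂ)‖ : ℝ) : ℂ)) :=
      ((Complex.continuous_ofReal.comp continuous_norm).continuousAt.tendsto).comp hD
    have := hconj.div habs (by simp)
    simpa [Pi.div_def] using this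
  -- conclude
  have final := hWlim.mul hczlim
  have heqfun : (fun j => (starRingEnd ℂ) (D (E ^ m j) z) /
      (‖D (E ^ m j) z‖ : ℂ) * c (E ^ m j • z)) = fun _ => c z :=
    funext fun j => hInv (m j) z
  rw [heqfun] at final
  have heq : (-1 : ℂ) * c z = c z := tendsto_nhds_unique final tendsto_const_nhds
  linear_combination -heq / 2
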